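/- Suppose 0 < l* ≤ π/6 and (tan(l*) + √3)·L* < 4 with L* > 0. Then the equation x·tan(l*·x) = 2√(1-x²)·(z+1)/(z-1) - √3, where z = e^{L*√(1-x²)}, has no solution x ∈ (0,1). -/

import Mathlib

open Real

lemma aux_coth (t : ℝ) (ht : 0 < t) :
    2 * (Real.exp t - 1) < t * (Real.exp t + 1) := by
  have hg : StrictMonoOn (fun u : ℝ => (u - 1) * Real.exp u + 1) (Set.Ici 0) := by
    apply strictMonoOn_of_deriv_pos (convex_Ici 0)
    · fun_prop
    · intro u hu
      rw [interior_Ici] at hu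
      have hd : HasDerivAt (fun u : ℝ => (u - 1) * Real.exp u + 1)
          (u * Real.exp u) u := by
        have := (((hasDerivAt_id u).sub_const 1).mul (Real.hasDerivAt_exp u)).add_const 1
        refine this.congr_deriv ?_
        simp only [id_eq]; ring
      rw [hd.deriv]
      exact mul_pos hu (Real.exp_pos u)
  have hgpos : ∀ u : ℝ, 0 < u → 0 < (u - 1) * Real.exp u + 1 := by
    intro u hu
    have := hg (Set.self_mem_Ici) (Set.mem_Ici.2 hu.le) hu
    simpa using this
  have hf : StrictMonoOn
      (fun u : ℝ => u * (Real.exp u + 1) - 2 * (Real.exp u - 1)) (Set.Ici 0) := by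
    apply strictMonoOn_of_deriv_pos (convex_Ici 0)
    · fun_prop
    · intro u hu
      rw [interior_Ici] at hu
      have hd : HasDerivAt (fun u : ℝ => u * (Real.exp u + 1) - 2 * (Real.exp u - 1))
          ((u - 1) * Real.exp u + 1) u := by
        have := ((hasDerivAt_id u).mul ((Real.hasDerivAt_exp u).add_const 1)).sub
          (((Real.hasDerivAt_exp u).sub_const 1).const_mul 2)
        refine this.congr_deriv ?_
        simp only [id_eq]; ring
      rw [hd.deriv]
      exact hgpos u hu
  have := hf (Set.self_mem_Ici) (Set.mem_Ici.2 ht.le) ht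
  simp only [zero_mul, Real.exp_zero, sub_self, mul_zero, zero_sub, mul_self_nonneg] at this
  nlinarith [this]

/-- Case I of the spectral analysis: if `0 < l* ≤ π/6`, `L* > 0` and
`(tan l* + √3)L* < 4`, then the equation
`x·tan(l*x) = 2√(1-x²)(z+1)/(z-1) - √3` with `z = e^{L*√(1-x²)}`
has no solution `x ∈ (0,1)`. -/
theorem case_I_no_eigenvalue
    (l L : ℝ) (hl : 0 < l) (hl' : l ≤ π / 6) (hL : 0 < L)
    (hcond : (Real.tan l + Real.sqrt 3) * L < 4) :
    ¬ ∃ x : ℝ, 0 < x ∧ x < 1 ∧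
      x * Real.tan (l * x) =
        2 * Real.sqrt (1 - x ^ 2) *
            (Real.exp (L * Real.sqrt (1 - x ^ 2)) + 1) /
            (Real.exp (L * Real.sqrt (1 - x ^ 2)) - 1)
          - Real.sqrt 3 := by
  rintro ⟨x, hx0, hx1, heq⟩
  set s := Real.sqrt (1 - x ^ 2) with hs_def
  have hs : 0 < s := Real.sqrt_pos.2 (by nlinarith)
  have ht0 : 0 < L * s := mul_pos hL hs
  set z := Real.exp (L * s) with hz_def
  have hz : 1 < z := by
    have := Real.add_one_le_exp (L * s)
    simp only [hz_def]; linarith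
  have key := aux_coth (L * s) ht0
  have hzsub : (0:ℝ) < z - 1 := by linarith
  have h1 : 4 / L < 2 * s * (z + 1) / (z - 1) := by
    rw [div_lt_div_iff₀ hL hzsub]
    nlinarith
  have hsqrt3 : 0 < Real.sqrt 3 := by positivity
  have htl : Real.tan l + Real.sqrt 3 < 4 / L := by
    rw [lt_div_iff₀ hL]
    nlinarith
  have hpi2 : l ≤ π / 2 := le_trans hl' (by linarith [pi_pos])
  have hlx : l * x < l := by nlinarith
  have hlx2 : l * x < π / 2 := lt_of_lt_of_le hlx (le_trans hl' (by linarith [pi_pos]))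
  have hlxpos : 0 < l * x := mul_pos hl hx0
  have hltan : Real.tan (l * x) < Real.tan l :=
    Real.tan_lt_tan_of_nonneg_of_lt_pi_div_two hlxpos.le
      (lt_of_le_of_lt hl' (by linarith [pi_pos])) hlx
  have htanpos : 0 < Real.tan (l * x) :=
    Real.tan_pos_of_pos_of_lt_pi_div_two hlxpos hlx2
  have hlhs : x * Real.tan (l * x) < Real.tan l := by nlinarith
  rw [heq] at hlhs
  linarith
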